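/- Fixed point sets of s₂ and of T∘s₂ on the Bolza curve (Proposition on fixed point sets, parts for s₂): for (z,w) ∈ P with w ≠ 0, one has s₂(z,w) = (z,w) if and only if z is purely imaginary with Im z > 0 (i.e. z lies on the open positive imaginary ray a₂); and T(s₂(z,w)) = (z,w) if and only if z is purely imaginary with Im z < 0 (i.e. z lies on the open negative imaginary ray a₄). In other words, Fix(s₂) is the full Π-preimage of a₂ and Fix(T∘s₂) is the full Π-preimage of a₄, away from points with w = 0. -/

import Mathlib

noncomputable section
open Complex ComplexConjugate

/-- `α = exp(iπ/4)`. -/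
def bolzaAlpha : ℂ := Complex.exp (Real.pi * Complex.I / 4)

/-- `β = exp(3iπ/4)`. -/
def bolzaBeta : ℂ := Complex.exp (3 * Real.pi * Complex.I / 4)

/-- The affine Bolza curve `P = {(z,w) : w²(z+α)(z+β) = z(z−α)(z−β)}`. -/
def BolzaCurve : Set (ℂ × ℂ) :=
  {p | p.2 ^ 2 * (p.1 + bolzaAlpha) * (p.1 + bolzaBeta)
       = p.1 * (p.1 - bolzaAlpha) * (p.1 - bolzaBeta)}

/-- The symmetry `s₁(z,w) = (conj z, conj z / conj w)`. -/
def s1 (p : ℂ × ℂ) : ℂ × ℂ := (conj p.1, conj p.1 / conj p.2)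

/-- The symmetry `s₂(z,w) = (−conj z, i·conj w)`. -/
def s2 (p : ℂ × ℂ) : ℂ × ℂ := (-conj p.1, Complex.I * conj p.2)

/-- The symmetry `s₃(z,w) = (1/conj z, conj w / conj z)`. -/
def s3 (p : ℂ × ℂ) : ℂ × ℂ := (1 / conj p.1, conj p.2 / conj p.1)

/-- The hyperelliptic involution `T(z,w) = (z,−w)`. -/
def hypT (p : ℂ × ℂ) : ℂ × ℂ := (p.1, -p.2)

lemma bolzaAlpha_eq :
    bolzaAlpha = ((Real.sqrt 2 / 2 : ℝ) : ℂ) + ((Real.sqrt 2 / 2 : ℝ) : ℂ) * Complex.I := by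
  rw [bolzaAlpha,
    show (Real.pi : ℂ) * Complex.I / 4 = ((Real.pi / 4 : ℝ) : ℂ) * Complex.I by
      push_cast; ring,
    Complex.exp_mul_I, ← Complex.ofReal_cos, ← Complex.ofReal_sin,
    Real.cos_pi_div_four, Real.sin_pi_div_four]

lemma bolzaBeta_eq : bolzaBeta = bolzaAlpha * Complex.I := by
  have h : bolzaBeta = bolzaAlpha * Complex.exp (((Real.pi / 2 : ℝ) : ℂ) * Complex.I) := by
    rw [bolzaAlpha, bolzaBeta, ← Complex.exp_add]
    congr 1
    push_cast
    ring
  rw [h, Complex.exp_mul_I, ← Complex.ofReal_cos, ← Complex.ofReal_sin,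
    Real.cos_pi_div_two, Real.sin_pi_div_two]
  simp

/-- Fixed point sets of `s₂` and of `T∘s₂` on the Bolza curve: away from `w = 0`,
`Fix(s₂)` is the preimage of the open positive imaginary ray `a₂` under the
projection `Π(z,w) = z`, and `Fix(T∘s₂)` is the preimage of the open negative
imaginary ray `a₄`. -/
theorem fix_s2 (z w : ℂ) (hP : (z, w) ∈ BolzaCurve) (hw : w ≠ 0) :
    (s2 (z, w) = (z, w) ↔ -conj z = z ∧ 0 < z.im) ∧
    (hypT (s2 (z, w)) = (z, w) ↔ -conj z = z ∧ z.im < 0) := by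
  have hI2 : (Complex.I) ^ 2 = -1 := Complex.I_sq
  have hr2 : (Real.sqrt 2 : ℝ) ^ 2 = 2 := Real.sq_sqrt (by norm_num)
  have hr2c : ((Real.sqrt 2 : ℝ) : ℂ) ^ 2 = 2 := by exact_mod_cast hr2
  set r : ℝ := Real.sqrt 2 with hrdef
  have hsum : bolzaAlpha + bolzaBeta = ((r : ℝ) : ℂ) * Complex.I := by
    rw [bolzaBeta_eq, bolzaAlpha_eq]
    push_cast
    linear_combination ((r : ℂ) / 2) * hI2
  have hprod : bolzaAlpha * bolzaBeta = -1 := by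
    rw [bolzaBeta_eq, bolzaAlpha_eq]
    push_cast
    linear_combination ((r : ℂ) ^ 2 / 4 * Complex.I + (r : ℂ) ^ 2 / 2) * hI2 -
      (1 / 2 : ℂ) * hr2c
  have hns : 0 < Complex.normSq w := Complex.normSq_pos.mpr hw
  have key : -conj z = z →
      ((Complex.I * conj w = w ↔ 0 < z.im) ∧ (Complex.I * conj w = -w ↔ z.im < 0)) := by
    intro h1
    have hre : z.re = 0 := by
      have := congrArg Complex.re h1
      simp at this
      linarith
    set t : ℝ := z.im with htdef
    have hz : z = (t : ℂ) * Complex.I := by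
      apply Complex.ext <;> simp [hre, htdef]
    simp only [BolzaCurve, Set.mem_setOf_eq] at hP
    rw [hz] at hP
    set A : ℝ := t ^ 2 + r * t + 1 with hAdef
    set B : ℝ := t ^ 2 - r * t + 1 with hBdef
    have e1 : ((t : ℂ) * Complex.I + bolzaAlpha) * ((t : ℂ) * Complex.I + bolzaBeta)
        = -((A : ℝ) : ℂ) := by
      rw [hAdef]; push_cast
      linear_combination (t : ℂ) * Complex.I * hsum + hprod +
        ((t : ℂ) ^ 2 + (r : ℂ) * (t : ℂ)) * hI2
    have e2 : ((t : ℂ) * Complex.I - bolzaAlpha) * ((t : ℂ) * Complex.I - bolzaBeta)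
        = -((B : ℝ) : ℂ) := by
      rw [hBdef]; push_cast
      linear_combination (-(t : ℂ) * Complex.I) * hsum + hprod +
        ((t : ℂ) ^ 2 - (r : ℂ) * (t : ℂ)) * hI2
    have hw2 : w ^ 2 * ((A : ℝ) : ℂ) = ((t * B : ℝ) : ℂ) * Complex.I := by
      push_cast
      push_cast at e1 e2
      linear_combination (-1 : ℂ) * hP + w ^ 2 * e1 - (t : ℂ) * Complex.I * e2
    have hApos : 0 < A := by rw [hAdef]; nlinarith [sq_nonneg (2 * t + r), hr2]
    have hBpos : 0 < B := by rw [hBdef]; nlinarith [sq_nonneg (2 * t - r), hr2]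
    constructor
    · constructor
      · intro h
        -- w^2 = I * normSq w
        have h2 : w ^ 2 = Complex.I * ((Complex.normSq w : ℝ) : ℂ) := by
          rw [← Complex.mul_conj]
          linear_combination w * h.symm
        have h3 : ((Complex.normSq w * A : ℝ) : ℂ) = ((t * B : ℝ) : ℂ) := by
          push_cast
          have := hw2
          rw [h2] at this
          push_cast at this
          linear_combination (-Complex.I) * this +
            ((Complex.normSq w : ℂ) * (A : ℂ) - (t : ℂ) * (B : ℂ)) * hI2
        have h4 : Complex.normSq w * A = t * B := by exact_mod_cast h3
        nlinarith
      · intro ht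
        have hm : Complex.normSq w = t * B / A := by
          have habs : ‖w‖ ^ 2 = ‖w ^ 2‖ := (norm_pow w 2).symm
          have hw2' : w ^ 2 = ((t * B / A : ℝ) : ℂ) * Complex.I := by
            have hA0 : ((A : ℝ) : ℂ) ≠ 0 := by
              exact_mod_cast Complex.ofReal_ne_zero.mpr hApos.ne'
            field_simp
            push_cast
            push_cast at hw2
            field_simp
            linear_combination hw2
          rw [hw2'] at habs
          have : ‖((t * B / A : ℝ) : ℂ) * Complex.I‖ = t * B / A := by
            rw [norm_mul, Complex.norm_I, Complex.norm_real, Real.norm_eq_abs, mul_one, abs_of_pos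
              (by positivity)]
          rw [this] at habs
          rw [← Complex.sq_norm, habs]
        have hw2' : w ^ 2 = Complex.I * ((Complex.normSq w : ℝ) : ℂ) := by
          rw [hm]
          have hA0 : ((A : ℝ) : ℂ) ≠ 0 := by
            exact_mod_cast Complex.ofReal_ne_zero.mpr hApos.ne'
          field_simp
          push_cast
          push_cast at hw2
          field_simp
          linear_combination hw2
        have hfac : (w - Complex.I * conj w) * w = 0 := by
          rw [← Complex.mul_conj] at hw2'
          linear_combination hw2'
        rcases mul_eq_zero.mp hfac with h | h
        · linear_combination -h
        · exact absurd h hw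
    · constructor
      · intro h
        have h2 : w ^ 2 = -(Complex.I * ((Complex.normSq w : ℝ) : ℂ)) := by
          rw [← Complex.mul_conj]
          linear_combination w * h
        have h3 : ((Complex.normSq w * A : ℝ) : ℂ) = ((-(t * B) : ℝ) : ℂ) := by
          push_cast
          have := hw2
          rw [h2] at this
          push_cast at this
          linear_combination Complex.I * this +
            ((Complex.normSq w : ℂ) * (A : ℂ) + (t : ℂ) * (B : ℂ)) * hI2
        have h4 : Complex.normSq w * A = -(t * B) := by exact_mod_cast h3
        nlinarith
      · intro ht
        have hm : Complex.normSq w = -(t * B) / A := by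
          have habs : ‖w‖ ^ 2 = ‖w ^ 2‖ := (norm_pow w 2).symm
          have hw2' : w ^ 2 = ((t * B / A : ℝ) : ℂ) * Complex.I := by
            have hA0 : ((A : ℝ) : ℂ) ≠ 0 := by
              exact_mod_cast Complex.ofReal_ne_zero.mpr hApos.ne'
            field_simp
            push_cast
            push_cast at hw2
            field_simp
            linear_combination hw2
          rw [hw2'] at habs
          have : ‖((t * B / A : ℝ) : ℂ) * Complex.I‖ = -(t * B) / A := by
            rw [norm_mul, Complex.norm_I, Complex.norm_real, Real.norm_eq_abs, mul_one]
            rw [abs_of_neg (by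
              apply div_neg_of_neg_of_pos _ hApos
              nlinarith)]
            ring
          rw [this] at habs
          rw [← Complex.sq_norm, habs]
        have hw2' : w ^ 2 = -(Complex.I * ((Complex.normSq w : ℝ) : ℂ)) := by
          rw [hm]
          have hA0 : ((A : ℝ) : ℂ) ≠ 0 := by
            exact_mod_cast Complex.ofReal_ne_zero.mpr hApos.ne'
          field_simp
          push_cast
          push_cast at hw2
          field_simp
          linear_combination hw2
        have hfac : (w + Complex.I * conj w) * w = 0 := by
          rw [← Complex.mul_conj] at hw2'
          linear_combination hw2'
        rcases mul_eq_zero.mp hfac with h | h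
        · linear_combination h
        · exact absurd h hw
  constructor
  · simp only [s2, Prod.mk.injEq]
    constructor
    · rintro ⟨h1, h2⟩
      exact ⟨h1, ((key h1).1).mp h2⟩
    · rintro ⟨h1, h2⟩
      exact ⟨h1, ((key h1).1).mpr h2⟩
  · simp only [hypT, s2, Prod.mk.injEq]
    constructor
    · rintro ⟨h1, h2⟩
      refine ⟨h1, ((key h1).2).mp ?_⟩
      linear_combination -h2
    · rintro ⟨h1, h2⟩
      refine ⟨h1, ?_⟩
      have := ((key h1).2).mpr h2
      linear_combination -this
  
end
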